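/- arXiv:1501.01202 — 5 statements merged into one kernel-verified Lean document; each statement's English description precedes it below -/
import Mathlib

section
/- Let ESP = (α, p) be an exponential smoothing model satisfying Assumption A, and let x_{1:n} be a deterministic bit sequence of length n ≥ 1. Then ℓ(x_{1:n}; ESP) − h(x_{1:n}) ≤ ∑_{i=0}^{n−1} log₂(1/(1 − p(1)·βᵢ)). -/
open Finset Real

/-- The exponential smoothing model's prediction: `espP α p x k y` is the probability
assigned to bit `y` after observing `x 1, …, x k` (bits are `Bool`, `1 ↦ true`). -/
noncomputable def espP (α : ℕ → ℝ) (p : Bool → ℝ) (x : ℕ → Bool) : ℕ → Bool → ℝ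
  | 0, y => p y
  | k + 1, y =>
      if y = x (k + 1) then α (k + 1) * espP α p x k y + (1 - α (k + 1))
      else α (k + 1) * espP α p x k y

/-- Ideal code length assigned by the model to the letters `x (a+1), …, x b`. -/
noncomputable def codeLen (α : ℕ → ℝ) (p : Bool → ℝ) (x : ℕ → Bool) (a b : ℕ) : ℝ :=
  ∑ i ∈ Finset.Ico a b, -Real.logb 2 (espP α p x i (x (i + 1)))

/-- `beta α i = α 1 * ⋯ * α i`, with `beta α 0 = 1`. -/
noncomputable def beta (α : ℕ → ℝ) (i : ℕ) : ℝ := ∏ k ∈ Finset.Icc 1 i, α k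

/-- Binary entropy function (base-2); `Real.logb 2 0 = 0` handles the `0 log 0 = 0` convention. -/
noncomputable def binEnt (q : ℝ) : ℝ := -q * Real.logb 2 q - (1 - q) * Real.logb 2 (1 - q)

/-- Empirical entropy of the subsequence `x (a+1), …, x b`. -/
noncomputable def empEnt (x : ℕ → Bool) (a b : ℕ) : ℝ :=
  ((b : ℝ) - a) *
    binEnt ((((Finset.Icc (a + 1) b).filter (fun i => x i = true)).card : ℝ) / ((b : ℝ) - a))

/-- `S` is a partition of the integer interval `(0, n]` into segments `(a, b]`
(represented by pairs `(a, b)`): every point of `(0, n]` lies in exactly one segment. -/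
def IsPartition (S : Finset (ℕ × ℕ)) (n : ℕ) : Prop :=
  (∀ s ∈ S, s.1 < s.2 ∧ s.2 ≤ n) ∧
    ∀ i, 1 ≤ i → i ≤ n → ∃! s, s ∈ S ∧ s.1 < i ∧ i ≤ s.2

lemma espP_det (α : ℕ → ℝ) (p : Bool → ℝ) (x : ℕ → Bool) (c : Bool) :
    ∀ k, (∀ j, 1 ≤ j → j ≤ k → x j = c) →
      espP α p x k c = 1 - (1 - p c) * beta α k := by
  intro k
  induction k with
  | zero => intro _; simp [espP, beta]
  | succ k ih =>
    intro hc
    have hx : x (k + 1) = c := hc _ (Nat.le_add_left 1 k) le_rfl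
    have hb : beta α (k + 1) = beta α k * α (k + 1) := by
      rw [beta, beta, Finset.prod_Icc_succ_top (Nat.le_add_left 1 k)]
    have ih' := ih (fun j h1 h2 => hc j h1 (h2.trans (Nat.le_succ k)))
    rw [espP, if_pos hx.symm, ih', hb]
    ring

theorem stmt0 (α : ℕ → ℝ) (p : Bool → ℝ) (x : ℕ → Bool) (n : ℕ) (hn : 1 ≤ n)
    (hα : ∀ k, 1 ≤ k → 1 / 2 < α k ∧ α k < 1)
    (hp0 : 0 < p false) (hple : p false ≤ p true) (hpsum : p false + p true = 1)
    (hdet : ∀ i ∈ Finset.Icc 1 n, ∀ j ∈ Finset.Icc 1 n, x i = x j) :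
    codeLen α p x 0 n - empEnt x 0 n ≤
      ∑ i ∈ Finset.range n, Real.logb 2 (1 / (1 - p true * beta α i)) := by
  set c := x 1 with hcdef
  have hc : ∀ j, 1 ≤ j → j ≤ n → x j = c := by
    intro j h1 h2
    exact hdet j (Finset.mem_Icc.mpr ⟨h1, h2⟩) 1 (Finset.mem_Icc.mpr ⟨le_rfl, hn⟩)
  -- basic facts
  have hpt : 0 < p true := lt_of_lt_of_le hp0 hple
  have hpt1 : p true < 1 := by linarith
  have hbpos : ∀ i, 0 < beta α i := by
    intro i
    exact Finset.prod_pos (fun k hk => by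
      have := (hα k (Finset.mem_Icc.mp hk).1).1; linarith)
  have hble : ∀ i, beta α i ≤ 1 := by
    intro i
    exact Finset.prod_le_one (fun k hk => by
      have := (hα k (Finset.mem_Icc.mp hk).1).1; linarith)
      (fun k hk => le_of_lt (hα k (Finset.mem_Icc.mp hk).1).2)
  -- empirical entropy vanishes
  have hemp : empEnt x 0 n = 0 := by
    unfold empEnt
    cases hcb : c with
    | true =>
      have : (Finset.Icc (0 + 1) n).filter (fun i => x i = true) = Finset.Icc 1 n := by
        apply Finset.filter_true_of_mem
        intro i hi
        rw [hc i (Finset.mem_Icc.mp hi).1 (Finset.mem_Icc.mp hi).2, hcb]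
      rw [this]
      have hne : ((n : ℝ) - (0 : ℕ)) ≠ 0 := by
        push_cast; simp only [sub_zero]
        exact_mod_cast Nat.one_le_iff_ne_zero.mp hn ∘ Nat.cast_injective.eq_iff.mp ∘ id
      have : ((Finset.Icc 1 n).card : ℝ) / ((n : ℝ) - (0 : ℕ)) = 1 := by
        rw [Nat.card_Icc]; push_cast; field_simp; rw [sub_zero]; exact div_self (by simpa using hne)
      rw [this]
      simp [binEnt]
    | false =>
      have : (Finset.Icc (0 + 1) n).filter (fun i => x i = true) = ∅ := by
        apply Finset.filter_false_of_mem
        intro i hi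
        rw [hc i (Finset.mem_Icc.mp hi).1 (Finset.mem_Icc.mp hi).2, hcb]
        simp
      rw [this]
      simp [binEnt]
  rw [hemp, sub_zero, codeLen, ← Finset.range_eq_Ico]
  apply Finset.sum_le_sum
  intro i hi
  have hin : i < n := Finset.mem_range.mp hi
  have hxc : x (i + 1) = c := hc _ (Nat.le_add_left 1 i) hin
  have hesp : espP α p x i (x (i + 1)) = 1 - (1 - p c) * beta α i := by
    rw [hxc]
    exact espP_det α p x c i (fun j h1 h2 => hc j h1 (h2.trans hin.le))
  have h1pc : 1 - p c ≤ p true := by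
    cases hcb : c with
    | true => linarith
    | false => linarith
  have hbpos' := hbpos i
  have hble' := hble i
  have hbpos2 : 0 < 1 - p true * beta α i := by nlinarith
  have hle : 1 - p true * beta α i ≤ espP α p x i (x (i + 1)) := by
    rw [hesp]
    nlinarith
  rw [one_div, Real.logb_inv]
  have := Real.logb_le_logb_of_le (b := 2) (by norm_num) hbpos2 hle
  linarith
end

section
/- Let x_{1:n} be a non-deterministic bit sequence of length n ≥ 2 such that the suffix x_{2:n} is also non-deterministic. Then h(x_{1:n}) − h(x_{2:n}) ≥ n·H(1/n) − (n−1)·H(1/(n−1)). -/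
open Finset Real

lemma F_mono : MonotoneOn (fun s : ℝ => (s+1) * Real.log (s+1) - s * Real.log s) (Set.Ici 1) := by
  have hc : Continuous (fun s : ℝ => (s+1) * Real.log (s+1) - s * Real.log s) :=
    (Real.continuous_mul_log.comp (continuous_id.add continuous_const)).sub Real.continuous_mul_log
  have hd : ∀ s : ℝ, 1 < s → HasDerivAt (fun s : ℝ => (s+1) * Real.log (s+1) - s * Real.log s)
      (Real.log (s+1) - Real.log s) s := by
    intro s hs
    have h1 : HasDerivAt (fun s : ℝ => s * Real.log s) (Real.log s + 1) s :=
      Real.hasDerivAt_mul_log (by linarith)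
    have h2 : HasDerivAt (fun s : ℝ => (s+1) * Real.log (s+1)) ((Real.log (s+1) + 1) * 1) s :=
      by have h := (Real.hasDerivAt_mul_log (x := s+1) (by linarith)).comp s ((hasDerivAt_id s).add_const 1); exact h
    have := h2.sub h1
    convert this using 1
    · rfl
    · rfl
    · rfl
    · ring
  rw [show Set.Ici (1:ℝ) = Set.Ici 1 from rfl]
  apply monotoneOn_of_deriv_nonneg (convex_Ici 1) hc.continuousOn
  · intro s hs
    rw [interior_Ici] at hs
    exact ((hd s hs).differentiableAt).differentiableWithinAt
  · intro s hs
    rw [interior_Ici] at hs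
    rw [(hd s hs).deriv]
    have hs1 : (1:ℝ) < s := hs
    have := Real.log_le_log (by linarith) (by linarith : s ≤ s + 1)
    linarith

lemma key {a b : ℝ} (ha : 1 ≤ a) (hab : a ≤ b) :
    (a+1) * Real.logb 2 (a+1) - a * Real.logb 2 a ≤
      (b+1) * Real.logb 2 (b+1) - b * Real.logb 2 b := by
  have h := F_mono (Set.mem_Ici.mpr ha) (Set.mem_Ici.mpr (ha.trans hab)) hab
  simp only [Real.logb]
  rw [show (a+1)*(Real.log (a+1)/Real.log 2) - a*(Real.log a/Real.log 2)
      = ((a+1)*Real.log (a+1) - a*Real.log a)/Real.log 2 by ring,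
    show (b+1)*(Real.log (b+1)/Real.log 2) - b*(Real.log b/Real.log 2)
      = ((b+1)*Real.log (b+1) - b*Real.log b)/Real.log 2 by ring]
  gcongr

lemma entExpand {m k : ℝ} (hk : 0 < k) (hkm : k < m) :
    m * binEnt (k/m) = m * Real.logb 2 m - k * Real.logb 2 k - (m - k) * Real.logb 2 (m - k) := by
  have hm : 0 < m := hk.trans hkm
  unfold binEnt
  rw [show (1 - k/m) = (m-k)/m by field_simp]
  rw [Real.logb_div hk.ne' hm.ne', Real.logb_div (by linarith) hm.ne']
  field_simp
  ring

theorem stmt3 (x : ℕ → Bool) (n : ℕ) (hn : 2 ≤ n)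
    (hnd : ∃ i ∈ Finset.Icc 1 n, ∃ j ∈ Finset.Icc 1 n, x i ≠ x j)
    (hsufnd : ∃ i ∈ Finset.Icc 2 n, ∃ j ∈ Finset.Icc 2 n, x i ≠ x j) :
    empEnt x 0 n - empEnt x 1 n ≥
      (n : ℝ) * binEnt (1 / n) - ((n : ℝ) - 1) * binEnt (1 / ((n : ℝ) - 1)) := by
  classical
  obtain ⟨i, hi, j, hj, hij⟩ := hsufnd
  rw [Finset.mem_Icc] at hi hj
  have hijne : i ≠ j := fun h => hij (h ▸ rfl)
  have hn3 : 3 ≤ n := by omega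
  obtain ⟨it, hit, hxt, jf, hjf, hxf⟩ :
      ∃ it, (2 ≤ it ∧ it ≤ n) ∧ x it = true ∧ ∃ jf, (2 ≤ jf ∧ jf ≤ n) ∧ x jf = false := by
    cases hxi : x i <;> cases hxj : x j
    · simp [hxi, hxj] at hij
    · exact ⟨j, hj, hxj, i, hi, hxi⟩
    · exact ⟨i, hi, hxi, j, hj, hxj⟩
    · simp [hxi, hxj] at hij
  set k2 := ((Finset.Icc 2 n).filter (fun i => x i = true)).card with hk2def
  have hk2lb : 1 ≤ k2 :=
    Finset.card_pos.mpr ⟨it, Finset.mem_filter.mpr ⟨Finset.mem_Icc.mpr hit, hxt⟩⟩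
  have hk2ub : k2 ≤ n - 2 := by
    have hsub : (Finset.Icc 2 n).filter (fun i => x i = true) ⊂ Finset.Icc 2 n := by
      refine (Finset.ssubset_iff_of_subset (Finset.filter_subset _ _)).mpr
        ⟨jf, Finset.mem_Icc.mpr hjf, ?_⟩
      simp [hxf]
    have := Finset.card_lt_card hsub
    rw [Nat.card_Icc] at this
    omega
  have hins : Finset.Icc 1 n = insert 1 (Finset.Icc 2 n) := by
    ext m; simp only [Finset.mem_insert, Finset.mem_Icc]; omega
  have he0 : empEnt x 0 n
      = (n:ℝ) * binEnt ((((Finset.Icc 1 n).filter (fun i => x i = true)).card : ℝ) / n) := by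
    simp [empEnt]
  have he1 : empEnt x 1 n = ((n:ℝ) - 1) * binEnt ((k2 : ℝ) / ((n:ℝ) - 1)) := by
    simp [empEnt, hk2def]
  set N : ℝ := (n : ℝ) with hNdef
  have hN3 : (3:ℝ) ≤ N := by rw [hNdef]; exact_mod_cast hn3
  set t : ℝ := (k2 : ℝ) with htdef
  have ht1 : 1 ≤ t := by rw [htdef]; exact_mod_cast hk2lb
  have ht2 : t ≤ N - 2 := by
    have h1 : (k2 : ℝ) ≤ ((n - 2 : ℕ) : ℝ) := by exact_mod_cast hk2ub
    have h2 : ((n - 2 : ℕ) : ℝ) = N - 2 := by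
      rw [hNdef]; push_cast [Nat.cast_sub (by omega : 2 ≤ n)]; ring
    rw [htdef]; linarith [h2 ▸ h1]
  -- expand RHS
  have hR1 : N * binEnt (1 / N) = N * Real.logb 2 N - 1 * Real.logb 2 1
      - (N - 1) * Real.logb 2 (N - 1) := entExpand one_pos (by linarith)
  have hR2 : (N - 1) * binEnt (1 / (N - 1)) = (N - 1) * Real.logb 2 (N - 1)
      - 1 * Real.logb 2 1 - (N - 1 - 1) * Real.logb 2 (N - 1 - 1) :=
    entExpand one_pos (by linarith)
  rw [ge_iff_le, he0, he1]
  -- key inequality endpoints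
  have honeNone : (1 : ℝ) ∉ (∅ : Set ℝ) := by simp
  cases hx1 : x 1 with
  | false =>
    have hcard : (((Finset.Icc 1 n).filter (fun i => x i = true)).card : ℝ) = t := by
      rw [hins, Finset.filter_insert, if_neg (by simp [hx1])]
    rw [hcard]
    have hL1 : N * binEnt (t / N) = N * Real.logb 2 N - t * Real.logb 2 t
        - (N - t) * Real.logb 2 (N - t) := entExpand (by linarith) (by linarith)
    have hL2 : (N - 1) * binEnt (t / (N - 1)) = (N - 1) * Real.logb 2 (N - 1)
        - t * Real.logb 2 t - (N - 1 - t) * Real.logb 2 (N - 1 - t) :=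
      entExpand (by linarith) (by linarith)
    have hkey := key (a := N - 1 - t) (b := N - 2) (by linarith) (by linarith)
    rw [show N - 1 - t + 1 = N - t by ring, show N - 2 + 1 = N - 1 by ring] at hkey
    rw [hL1, hL2, hR1, hR2, show N - 1 - 1 = N - 2 by ring]
    simp only [Real.logb_one]
    linarith
  | true =>
    have hone : (1:ℕ) ∉ Finset.Icc 2 n := by simp
    have hcard : (((Finset.Icc 1 n).filter (fun i => x i = true)).card : ℝ) = t + 1 := by
      rw [hins, Finset.filter_insert, if_pos (by simp [hx1]),
        Finset.card_insert_of_notMem (fun h => hone (Finset.filter_subset _ _ h))]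
      push_cast; ring
    rw [hcard]
    have hL1 : N * binEnt ((t + 1) / N) = N * Real.logb 2 N - (t + 1) * Real.logb 2 (t + 1)
        - (N - (t + 1)) * Real.logb 2 (N - (t + 1)) := entExpand (by linarith) (by linarith)
    have hL2 : (N - 1) * binEnt (t / (N - 1)) = (N - 1) * Real.logb 2 (N - 1)
        - t * Real.logb 2 t - (N - 1 - t) * Real.logb 2 (N - 1 - t) :=
      entExpand (by linarith) (by linarith)
    have hkey := key (a := t) (b := N - 2) ht1 (by linarith)
    rw [show N - 2 + 1 = N - 1 by ring] at hkey
    rw [hL1, hL2, hR1, hR2, show N - (t + 1) = N - 1 - t by ring,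
      show N - 1 - 1 = N - 2 by ring]
    simp only [Real.logb_one]
    linarith
end

section
/- For every real α with 0 < α < 1 and every integer m ≥ 0, ∑_{i=1}^{m} log₂(1/(1 − αⁱ)) ≤ (π·log₂ e)² / (6·log₂(1/α)). -/
open Finset Real

-- key: r/(1-r) ≤ 1/(-log r) for 0<r<1
lemma aux1 {r : ℝ} (h0 : 0 < r) (h1 : r < 1) : r / (1 - r) ≤ 1 / (-Real.log r) := by
  have hlog : Real.log (1/r) ≤ 1/r - 1 := Real.log_le_sub_one_of_pos (by positivity)
  rw [Real.log_div one_ne_zero h0.ne', Real.log_one] at hlog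
  have hc : 0 < -Real.log r := by
    have := Real.log_neg h0 h1; linarith
  rw [div_le_div_iff₀ (by linarith) hc]
  have : r * (-Real.log r) ≤ r * (1/r - 1) := by
    apply mul_le_mul_of_nonneg_left _ h0.le
    linarith
  calc r * (-Real.log r) ≤ r * (1/r - 1) := this
    _ = 1 - r := by field_simp
    _ ≤ 1 * (1 - r) := by linarith

lemma aux2 {r : ℝ} (h0 : 0 < r) (h1 : r < 1) (m : ℕ) :
    ∑ i ∈ Finset.Icc 1 m, r ^ i ≤ r / (1 - r) := by
  have : ∑ i ∈ Finset.Icc 1 m, r ^ i = r * ∑ i ∈ Finset.range m, r ^ i := by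
    rw [Finset.mul_sum]
    rw [← Finset.Ico_add_one_right_eq_Icc]
    rw [Finset.sum_Ico_eq_sum_range]
    simp [pow_succ, mul_comm, pow_add]
  rw [this, div_eq_mul_one_div]
  apply mul_le_mul_of_nonneg_left _ h0.le
  have h2 : (r^m - 1)/(r - 1) = (1 - r^m)/(1-r) := by
    rw [div_eq_div_iff (by linarith) (by linarith)]; ring
  rw [geom_sum_eq h1.ne, h2]
  have : 0 < r^m := by positivity
  rw [div_le_div_iff₀ (by linarith) (by linarith)]
  nlinarith

lemma keylem (a : ℝ) (ha0 : 0 < a) (ha1 : a < 1) (m : ℕ) :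
    ∑ i ∈ Finset.Icc 1 m, (-Real.log (1 - a ^ i)) ≤ π ^ 2 / (6 * (-Real.log a)) := by
  set c := -Real.log a with hc
  have hcpos : 0 < c := by
    have := Real.log_neg ha0 ha1; simp [hc]; linarith
  have hai : ∀ i ∈ Finset.Icc 1 m, 0 < a ^ i ∧ a ^ i < 1 := by
    intro i hi
    simp only [Finset.mem_Icc] at hi
    exact ⟨pow_pos ha0 i, pow_lt_one₀ ha0.le ha1 (by omega)⟩
  -- LHS as a sum of series
  have hser : HasSum (fun n : ℕ => ∑ i ∈ Finset.Icc 1 m, (a ^ i) ^ (n + 1) / (n + 1))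
      (∑ i ∈ Finset.Icc 1 m, (-Real.log (1 - a ^ i))) := by
    apply hasSum_sum
    intro i hi
    exact hasSum_pow_div_log_of_abs_lt_one (by rw [abs_of_pos (hai i hi).1]; exact (hai i hi).2)
  -- RHS series
  have hzeta : HasSum (fun n : ℕ => (1 / c) * (1 / ((n : ℝ) + 1) ^ 2)) ((1/c) * (π ^ 2 / 6)) := by
    apply HasSum.mul_left
    have h0 := hasSum_zeta_two
    have := (hasSum_nat_add_iff (f := fun n : ℕ => (1:ℝ) / (n:ℝ)^2) 1).2 (by simpa using h0)
    simpa using this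
  have := hasSum_le (f := fun n : ℕ => ∑ i ∈ Finset.Icc 1 m, (a ^ i) ^ (n + 1) / (n + 1))
    (g := fun n : ℕ => (1 / c) * (1 / ((n : ℝ) + 1) ^ 2)) ?_ hser hzeta
  · calc ∑ i ∈ Finset.Icc 1 m, (-Real.log (1 - a ^ i)) ≤ (1/c) * (π^2/6) := this
      _ = π ^ 2 / (6 * c) := by field_simp
  intro n
  have hr0 : 0 < a ^ (n + 1) := pow_pos ha0 _
  have hr1 : a ^ (n + 1) < 1 := pow_lt_one₀ ha0.le ha1 (by omega)
  have step1 : ∑ i ∈ Finset.Icc 1 m, (a ^ i) ^ (n + 1) / (n + 1)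
      = (1 / ((n:ℝ)+1)) * ∑ i ∈ Finset.Icc 1 m, (a ^ (n+1)) ^ i := by
    rw [Finset.mul_sum]
    congr 1 with i
    rw [← pow_mul, ← pow_mul, mul_comm i (n+1)]
    ring
  rw [step1]
  have hgeom : ∑ i ∈ Finset.Icc 1 m, (a ^ (n+1)) ^ i ≤ a^(n+1) / (1 - a^(n+1)) :=
    aux2 hr0 hr1 m
  have hb : a^(n+1) / (1 - a^(n+1)) ≤ 1 / (((n:ℝ)+1) * c) := by
    calc a^(n+1) / (1 - a^(n+1)) ≤ 1 / (-Real.log (a^(n+1))) := aux1 hr0 hr1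
      _ = 1 / (((n:ℝ)+1) * c) := by
          rw [Real.log_pow]
          push_cast
          rw [hc]
          ring_nf
  have hn1 : (0:ℝ) < (n:ℝ) + 1 := by positivity
  calc (1 / ((n:ℝ)+1)) * ∑ i ∈ Finset.Icc 1 m, (a ^ (n+1)) ^ i
      ≤ (1 / ((n:ℝ)+1)) * (1 / (((n:ℝ)+1) * c)) := by
        apply mul_le_mul_of_nonneg_left (hgeom.trans hb) (by positivity)
    _ = (1 / c) * (1 / ((n : ℝ) + 1) ^ 2) := by field_simp

theorem stmt10 (a : ℝ) (ha0 : 0 < a) (ha1 : a < 1) (m : ℕ) :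
    ∑ i ∈ Finset.Icc 1 m, Real.logb 2 (1 / (1 - a ^ i)) ≤
      (π * Real.logb 2 (Real.exp 1)) ^ 2 / (6 * Real.logb 2 (1 / a)) := by
  have hln2 : 0 < Real.log 2 := Real.log_pos (by norm_num)
  have hcpos : 0 < -Real.log a := by have := Real.log_neg ha0 ha1; linarith
  have key := keylem a ha0 ha1 m
  have hL : ∑ i ∈ Finset.Icc 1 m, Real.logb 2 (1 / (1 - a ^ i))
      = (∑ i ∈ Finset.Icc 1 m, -Real.log (1 - a ^ i)) / Real.log 2 := by
    rw [Finset.sum_div]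
    refine Finset.sum_congr rfl fun i _ => ?_
    rw [Real.logb, one_div, Real.log_inv]
  have hR : (π * Real.logb 2 (Real.exp 1)) ^ 2 / (6 * Real.logb 2 (1 / a))
      = (π ^ 2 / (6 * (-Real.log a))) / Real.log 2 := by
    rw [Real.logb, Real.logb, Real.log_exp, show (1:ℝ)/a = a⁻¹ from one_div a, Real.log_inv]
    field_simp
  rw [hL, hR]
  gcongr
end

section
/- For every real α with 0 < α < 1 and every real m > 0, ∫₀^m ln(1/(1 − α^z)) dz = (1/ln(1/α)) · ∑_{j=1}^{∞} (1 − α^{jm})/j². -/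
open Finset Real

open MeasureTheory

lemma expInt (c m : ℝ) (hc : c ≠ 0) :
    ∫ z in (0:ℝ)..m, Real.exp (c * z) = (Real.exp (c * m) - 1) / c := by
  rw [intervalIntegral.integral_comp_mul_left Real.exp hc]
  simp [integral_exp, smul_eq_mul, div_eq_inv_mul]

theorem stmt11 (a : ℝ) (ha0 : 0 < a) (ha1 : a < 1) (m : ℝ) (hm : 0 < m) :
    ∫ z in (0 : ℝ)..m, Real.log (1 / (1 - a ^ z)) =
      (1 / Real.log (1 / a)) * ∑' j : ℕ, (1 - a ^ (((j : ℝ) + 1) * m)) / ((j : ℝ) + 1) ^ 2 := by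
  have hla : Real.log a < 0 := Real.log_neg ha0 ha1
  have hLa : Real.log (1/a) = -Real.log a := by rw [one_div, Real.log_inv]
  set F : ℕ → ℝ → ℝ := fun j z => Real.exp ((((j:ℝ)+1) * Real.log a) * z) / ((j:ℝ)+1) with hF
  have hj1 : ∀ j : ℕ, (0:ℝ) < (j:ℝ)+1 := fun j => by positivity
  have hc : ∀ j : ℕ, (((j:ℝ)+1) * Real.log a) ≠ 0 :=
    fun j => mul_ne_zero (hj1 j).ne' hla.ne
  have hFeq : ∀ (j : ℕ) (z : ℝ), F j z = (a ^ z)^(j+1) / (((j:ℕ):ℝ)+1) := by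
    intro j z
    have h1 : (a ^ z)^(j+1) = (a ^ z) ^ (((j+1:ℕ)):ℝ) := (Real.rpow_natCast _ _).symm
    rw [hF, h1, ← Real.rpow_mul ha0.le, Real.rpow_def_of_pos ha0]
    push_cast
    ring_nf
  -- pointwise identity for z > 0
  have hptwise : ∀ z : ℝ, 0 < z → Real.log (1 / (1 - a ^ z)) = ∑' j, F j z := by
    intro z hz
    have hx0 : (0:ℝ) < a ^ z := Real.rpow_pos_of_pos ha0 z
    have hx1 : a ^ z < 1 := Real.rpow_lt_one ha0.le ha1 hz
    have habs : |a ^ z| < 1 := by rw [abs_of_pos hx0]; exact hx1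
    have hs := Real.hasSum_pow_div_log_of_abs_lt_one habs
    rw [one_div, Real.log_inv, ← hs.tsum_eq]
    exact tsum_congr fun j => (hFeq j z).symm
  -- value of each term's integral
  have hval : ∀ j : ℕ, ∫ z in Set.Ioc (0:ℝ) m, F j z
      = (1 / Real.log (1/a)) * ((1 - a ^ (((j:ℝ)+1)*m)) / ((j:ℝ)+1)^2) := by
    intro j
    rw [← intervalIntegral.integral_of_le hm.le]
    have : ∫ z in (0:ℝ)..m, F j z
        = (∫ z in (0:ℝ)..m, Real.exp ((((j:ℝ)+1) * Real.log a) * z)) / ((j:ℝ)+1) := by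
      simp [hF, intervalIntegral.integral_div]
    rw [this, expInt _ _ (hc j)]
    have hem : Real.exp ((((j:ℝ)+1) * Real.log a) * m) = a ^ (((j:ℝ)+1)*m) := by
      rw [Real.rpow_def_of_pos ha0]; ring_nf
    rw [hem, hLa]
    have hla' : Real.log a ≠ 0 := hla.ne
    have hj' : ((j:ℝ)+1) ≠ 0 := (hj1 j).ne'
    field_simp
    ring
  -- integrability
  have hint : ∀ j : ℕ, Integrable (F j) (volume.restrict (Set.Ioc (0:ℝ) m)) := by
    intro j
    have hcont : Continuous (F j) :=
      (Real.continuous_exp.comp (continuous_const.mul continuous_id)).div_const _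
    exact hcont.integrableOn_Ioc
  -- summability of norms of integrals
  have hpos : ∀ (j : ℕ) (z : ℝ), 0 ≤ F j z :=
    fun j z => div_nonneg (Real.exp_pos _).le (hj1 j).le
  have hnorm : ∀ j : ℕ, (∫ z in Set.Ioc (0:ℝ) m, ‖F j z‖) = ∫ z in Set.Ioc (0:ℝ) m, F j z := by
    intro j
    exact integral_congr_ae (Filter.Eventually.of_forall fun z => Real.norm_of_nonneg (hpos j z))
  have hL0 : 0 < Real.log (1/a) := by rw [hLa]; linarith
  have hbound : Summable (fun j : ℕ => (1 / Real.log (1/a)) * (1 / ((j:ℝ)+1)^2)) := by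
    apply Summable.mul_left
    have h2 : Summable (fun n : ℕ => 1 / (n:ℝ)^2) := summable_one_div_nat_pow.mpr one_lt_two
    have := (summable_nat_add_iff 1).mpr h2
    refine this.congr fun j => ?_
    push_cast
    ring_nf
  have hsum : Summable fun j : ℕ => ∫ z in Set.Ioc (0:ℝ) m, ‖F j z‖ := by
    refine hbound.of_nonneg_of_le (fun j => ?_) (fun j => ?_)
    · rw [hnorm j]
      exact integral_nonneg (hpos j)
    · rw [hnorm j, hval j]
      have h1 : a ^ (((j:ℝ)+1)*m) ≥ 0 := (Real.rpow_pos_of_pos ha0 _).le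
      have h2 : (1 - a ^ (((j:ℝ)+1)*m)) / ((j:ℝ)+1)^2 ≤ 1 / ((j:ℝ)+1)^2 := by
        apply div_le_div_of_nonneg_right ?_ (by positivity)
        linarith
      exact mul_le_mul_of_nonneg_left h2 (one_div_nonneg.mpr hL0.le)
  rw [intervalIntegral.integral_of_le hm.le]
  have h1 : ∫ z in Set.Ioc (0:ℝ) m, Real.log (1 / (1 - a ^ z))
      = ∫ z in Set.Ioc (0:ℝ) m, ∑' j, F j z :=
    setIntegral_congr_fun measurableSet_Ioc (fun z hz => hptwise z hz.1)
  rw [h1, ← MeasureTheory.integral_tsum_of_summable_integral_norm hint hsum]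
  rw [tsum_congr hval, tsum_mul_left]
end

section
/- Let αₖ = exp(−π/√(12(k+1))) for k ≥ 1, and set β₀ = 1 and βᵢ = α₁·…·αᵢ for i ≥ 1. Then for all integers 0 ≤ a < b ≤ n, ∑_{i : a < i < b} log₂(1/(1 − βᵢ/β_a)) ≤ (π·log₂ e/√3)·√n. -/
open Finset Real

/-- auxiliary -/
lemma aux_tsum_bound {r : ℝ} (hr0 : 0 < r) (hr1 : r < 1) :
    Summable (fun j : ℕ => -Real.log (1 - r ^ (j + 1))) ∧
      ∑' j : ℕ, -Real.log (1 - r ^ (j + 1)) ≤ π ^ 2 / 6 * (r / (1 - r)) := by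
  have hpow : ∀ m : ℕ, r ^ (m + 1) < 1 := fun m => pow_lt_one₀ hr0.le hr1 (Nat.succ_ne_zero m)
  set f : ℕ × ℕ → ℝ := fun p => r ^ ((p.1 + 1) * (p.2 + 1)) / (p.2 + 1) with hf_def
  have hfpos : 0 ≤ f := fun p => by positivity
  -- slice sums over the second coordinate
  have hslice : ∀ j : ℕ, HasSum (fun m => f (j, m)) (-Real.log (1 - r ^ (j + 1))) := by
    intro j
    have h := hasSum_pow_div_log_of_abs_lt_one
      (x := r ^ (j + 1)) (by rw [abs_of_pos (by positivity)]; exact hpow j)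
    refine h.congr_fun fun m => ?_
    simp only [hf_def, ← pow_mul, Nat.mul_comm]
  -- summability of f
  have hsum_f : Summable f := by
    have hg : Summable fun p : ℕ × ℕ => r ^ p.1 * r ^ p.2 :=
      Summable.mul_of_nonneg (summable_geometric_of_lt_one hr0.le hr1)
        (summable_geometric_of_lt_one hr0.le hr1) (fun i => by positivity)
        (fun i => by positivity)
    refine Summable.of_nonneg_of_le (fun p => hfpos p) (fun p => ?_) hg
    calc f p ≤ r ^ ((p.1 + 1) * (p.2 + 1)) := by
          apply div_le_self (by positivity)
          have : (0:ℝ) ≤ (p.2 : ℝ) := Nat.cast_nonneg _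
          linarith
      _ ≤ r ^ (p.1 + p.2) := by
          apply pow_le_pow_of_le_one hr0.le hr1.le
          nlinarith [Nat.zero_le (p.1 * p.2)]
      _ = r ^ p.1 * r ^ p.2 := pow_add r p.1 p.2
  -- summability of the slice sums
  have hsummable1 : Summable (fun j : ℕ => -Real.log (1 - r ^ (j + 1))) := by
    have h := ((summable_prod_of_nonneg hfpos).mp hsum_f).2
    exact h.congr fun j => (hslice j).tsum_eq
  refine ⟨hsummable1, ?_⟩
  -- the swapped slice sums over the first coordinate
  have hslice2 : ∀ m : ℕ,
      HasSum (fun j => f (j, m)) (r ^ (m + 1) * (1 - r ^ (m + 1))⁻¹ / ((m : ℝ) + 1)) := by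
    intro m
    have h := ((hasSum_geometric_of_lt_one (r := r ^ (m + 1)) (by positivity) (hpow m)).mul_left
      (r ^ (m + 1))).div_const ((m : ℝ) + 1)
    refine h.congr_fun fun j => ?_
    simp only [hf_def]
    rw [show (j + 1) * (m + 1) = (m + 1) + j * (m + 1) by ring, pow_add, pow_mul']
  -- Basel
  have hbasel : HasSum (fun m : ℕ => 1 / ((m : ℝ) + 1) ^ 2) (π ^ 2 / 6) := by
    have h := (hasSum_nat_add_iff' (f := fun n : ℕ => (1 : ℝ) / (n : ℝ) ^ 2) 1).mpr hasSum_zeta_two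
    norm_num at h
    exact h.congr_fun fun m => by push_cast; ring
  have hRHS : HasSum (fun m : ℕ => 1 / ((m : ℝ) + 1) ^ 2 * (r / (1 - r)))
      (π ^ 2 / 6 * (r / (1 - r))) := hbasel.mul_right _
  have hr1' : (0:ℝ) < 1 - r := by linarith
  -- Fubini
  have hcomm : ∑' j : ℕ, -Real.log (1 - r ^ (j + 1))
      = ∑' m : ℕ, (r ^ (m + 1) * (1 - r ^ (m + 1))⁻¹ / ((m : ℝ) + 1)) := by
    calc ∑' j : ℕ, -Real.log (1 - r ^ (j + 1)) = ∑' (j : ℕ) (m : ℕ), f (j, m) :=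
          tsum_congr fun j => ((hslice j).tsum_eq).symm
      _ = ∑' (m : ℕ) (j : ℕ), f (j, m) :=
          (Summable.tsum_comm' (f := fun j m => f (j, m)) hsum_f (fun j => (hslice j).summable)
            fun m => (hslice2 m).summable).symm
      _ = ∑' m : ℕ, (r ^ (m + 1) * (1 - r ^ (m + 1))⁻¹ / ((m : ℝ) + 1)) :=
          tsum_congr fun m => (hslice2 m).tsum_eq
  rw [hcomm, ← hRHS.tsum_eq]
  have hsummable2 : Summable (fun m : ℕ => r ^ (m + 1) * (1 - r ^ (m + 1))⁻¹ / ((m : ℝ) + 1)) := by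
    have h := ((summable_prod_of_nonneg (f := fun p : ℕ × ℕ => f p.swap)
      (fun p => hfpos p.swap)).mp hsum_f.prod_symm).2
    exact h.congr fun m => (hslice2 m).tsum_eq
  refine Summable.tsum_le_tsum (fun m => ?_) hsummable2 hRHS.summable
  have hm1 : (0:ℝ) < (m : ℝ) + 1 := by positivity
  have hs1 : (0:ℝ) < 1 - r ^ (m + 1) := by linarith [hpow m]
  set S := ∑ t ∈ Finset.range (m + 1), r ^ t with hS
  have hgeom : (1 - r) * S = 1 - r ^ (m + 1) := by
    have h := geom_sum_mul r (m + 1)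
    rw [hS]; linear_combination -h
  have hlow : ((m : ℝ) + 1) * r ^ m ≤ S := by
    have h : ∀ t ∈ Finset.range (m + 1), r ^ m ≤ r ^ t := fun t ht =>
      pow_le_pow_of_le_one hr0.le hr1.le (Nat.le_of_lt_succ (Finset.mem_range.mp ht))
    calc ((m : ℝ) + 1) * r ^ m = ∑ t ∈ Finset.range (m + 1), r ^ m := by
          rw [Finset.sum_const, Finset.card_range]; push_cast; ring
      _ ≤ S := Finset.sum_le_sum h
  have key : ((m : ℝ) + 1) * r ^ (m + 1) * (1 - r) ≤ r * (1 - r ^ (m + 1)) := by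
    calc ((m : ℝ) + 1) * r ^ (m + 1) * (1 - r) = r * (1 - r) * (((m : ℝ) + 1) * r ^ m) := by
          rw [pow_succ]; ring
      _ ≤ r * (1 - r) * S := by
          apply mul_le_mul_of_nonneg_left hlow (by positivity)
      _ = r * (1 - r ^ (m + 1)) := by rw [mul_assoc, hgeom]
  have e1 : r ^ (m + 1) * (1 - r ^ (m + 1))⁻¹ / ((m : ℝ) + 1)
      = r ^ (m + 1) / ((1 - r ^ (m + 1)) * ((m : ℝ) + 1)) := by
    rw [← div_eq_mul_inv, div_div]
  have e2 : 1 / ((m : ℝ) + 1) ^ 2 * (r / (1 - r)) = r / ((1 - r) * ((m : ℝ) + 1) ^ 2) := by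
    rw [div_mul_div_comm, one_mul, mul_comm]
  rw [e1, e2, div_le_div_iff₀ (by positivity) (by positivity)]
  nlinarith [mul_le_mul_of_nonneg_left key hm1.le]

theorem stmt16 (n a b : ℕ) (hab : a < b) (hbn : b ≤ n) :
    ∑ i ∈ Finset.Ioo a b,
        Real.logb 2
          (1 / (1 -
            beta (fun k => Real.exp (-(π / Real.sqrt (12 * ((k : ℝ) + 1))))) i /
              beta (fun k => Real.exp (-(π / Real.sqrt (12 * ((k : ℝ) + 1))))) a)) ≤
      (π * Real.logb 2 (Real.exp 1) / Real.sqrt 3) * Real.sqrt n := by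
  set α : ℕ → ℝ := fun k => Real.exp (-(π / Real.sqrt (12 * ((k : ℝ) + 1)))) with hα
  have hn : 1 ≤ n := by omega
  have hncast : (1:ℝ) ≤ (n:ℝ) := by exact_mod_cast hn
  set x : ℝ := π / Real.sqrt (12 * n) with hx_def
  have hsq : (0:ℝ) < Real.sqrt (12 * n) := Real.sqrt_pos.mpr (by linarith)
  have hx : 0 < x := div_pos pi_pos hsq
  set r : ℝ := Real.exp (-x) with hr_def
  have hr0 : 0 < r := Real.exp_pos _
  have hr1 : r < 1 := by rw [hr_def, Real.exp_lt_one_iff]; linarith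
  have hlog2 : (0:ℝ) < Real.log 2 := Real.log_pos (by norm_num)
  -- each α k with k + 1 ≤ n is at most r
  have halpha : ∀ k : ℕ, k + 1 ≤ n → α k ≤ r := by
    intro k hk
    rw [hα, hr_def]
    apply Real.exp_le_exp.mpr
    apply neg_le_neg
    rw [hx_def]
    have hk' : (k:ℝ) + 1 ≤ (n:ℝ) := by exact_mod_cast hk
    have h1 : (0:ℝ) < Real.sqrt (12 * ((k:ℝ) + 1)) := Real.sqrt_pos.mpr (by positivity)
    exact div_le_div_of_nonneg_left pi_pos.le h1 (Real.sqrt_le_sqrt (by linarith))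
  -- beta quotient
  have hbpos : ∀ i : ℕ, 0 < beta α i := fun i => Finset.prod_pos fun k _ => Real.exp_pos _
  have hbeta : ∀ i : ℕ, a ≤ i → beta α i / beta α a = ∏ k ∈ Finset.Ioc a i, α k := by
    intro i hi
    have hIcc : ∀ m : ℕ, Finset.Icc 1 m = Finset.Ioc 0 m := fun m => by
      rw [← Finset.Icc_add_one_left_eq_Ioc, zero_add]
    have h1 : beta α a * ∏ k ∈ Finset.Ioc a i, α k = beta α i := by
      rw [beta, beta, hIcc, hIcc]
      exact Finset.prod_Ioc_consecutive α (Nat.zero_le a) hi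
    rw [← h1]
    exact mul_div_cancel_left₀ _ (hbpos a).ne'
  obtain ⟨hsummable, htsum⟩ := aux_tsum_bound hr0 hr1
  -- per-term bound
  have hterm : ∀ i ∈ Finset.Ioo a b,
      Real.logb 2 (1 / (1 - beta α i / beta α a)) ≤
        (Real.log 2)⁻¹ * -Real.log (1 - r ^ (i - a)) := by
    intro i hi
    obtain ⟨hai, hib⟩ := Finset.mem_Ioo.mp hi
    have hP : beta α i / beta α a = ∏ k ∈ Finset.Ioc a i, α k := hbeta i hai.le
    have hPpos : 0 < beta α i / beta α a := div_pos (hbpos i) (hbpos a)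
    have hPle : beta α i / beta α a ≤ r ^ (i - a) := by
      rw [hP]
      calc ∏ k ∈ Finset.Ioc a i, α k ≤ ∏ k ∈ Finset.Ioc a i, r :=
            Finset.prod_le_prod (fun k _ => (Real.exp_pos _).le)
              (fun k hk => halpha k (by
                have := (Finset.mem_Ioc.mp hk).2; omega))
        _ = r ^ (i - a) := by rw [Finset.prod_const, Nat.card_Ioc]
    have hrpow : r ^ (i - a) < 1 := pow_lt_one₀ hr0.le hr1 (by omega)
    have h1 : 0 < 1 - r ^ (i - a) := by linarith
    have h2 : 0 < 1 - beta α i / beta α a := by linarith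
    have hmono : Real.logb 2 (1 / (1 - beta α i / beta α a)) ≤
        Real.logb 2 (1 / (1 - r ^ (i - a))) := by
      apply (Real.logb_le_logb (by norm_num) (by positivity) (by positivity)).mpr
      exact one_div_le_one_div_of_le h1 (by linarith)
    refine hmono.trans_eq ?_
    rw [Real.logb, one_div, Real.log_inv]
    ring
  -- assemble
  calc ∑ i ∈ Finset.Ioo a b, Real.logb 2 (1 / (1 - beta α i / beta α a))
      ≤ ∑ i ∈ Finset.Ioo a b, (Real.log 2)⁻¹ * -Real.log (1 - r ^ (i - a)) :=
        Finset.sum_le_sum hterm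
    _ = (Real.log 2)⁻¹ * ∑ i ∈ Finset.Ioo a b, -Real.log (1 - r ^ (i - a)) := by
        rw [Finset.mul_sum]
    _ ≤ (Real.log 2)⁻¹ * (π ^ 2 / 6 * (r / (1 - r))) := by
        apply mul_le_mul_of_nonneg_left ?_ (by positivity)
        have hre : ∑ i ∈ Finset.Ioo a b, -Real.log (1 - r ^ (i - a))
            = ∑ j ∈ Finset.range (b - (a + 1)), -Real.log (1 - r ^ (j + 1)) := by
          rw [← Finset.Ico_add_one_left_eq_Ioo, Finset.sum_Ico_eq_sum_range]
          refine Finset.sum_congr rfl fun j hj => ?_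
          have he : a + 1 + j - a = j + 1 := by omega
          rw [he]
        rw [hre]
        refine le_trans (Summable.sum_le_tsum _ (fun j _ => ?_) hsummable) htsum
        have hj1 : r ^ (j + 1) < 1 := pow_lt_one₀ hr0.le hr1 (Nat.succ_ne_zero j)
        have hj0 : 0 < r ^ (j + 1) := by positivity
        simp only [neg_nonneg]
        exact Real.log_nonpos (by linarith) (by linarith)
    _ ≤ (Real.log 2)⁻¹ * (π ^ 2 / 6 * (1 / x)) := by
        apply mul_le_mul_of_nonneg_left ?_ (by positivity)
        apply mul_le_mul_of_nonneg_left ?_ (by positivity)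
        rw [div_le_div_iff₀ (by linarith) hx]
        have h2 : Real.exp x * r = 1 := by rw [hr_def, ← Real.exp_add]; simp
        nlinarith [Real.add_one_le_exp x]
    _ = (π * Real.logb 2 (Real.exp 1) / Real.sqrt 3) * Real.sqrt n := by
        rw [Real.logb, Real.log_exp, hx_def]
        have h12 : Real.sqrt (12 * n) = 2 * Real.sqrt 3 * Real.sqrt n := by
          rw [show (12:ℝ) * n = (2 * Real.sqrt 3) ^ 2 * n by
                rw [mul_pow, Real.sq_sqrt (by norm_num)]; norm_num,
              Real.sqrt_mul (by positivity), Real.sqrt_sq (by positivity)]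
        rw [h12, one_div_div]
        have h3 : Real.sqrt 3 * Real.sqrt 3 = 3 := Real.mul_self_sqrt (by norm_num)
        have h3' : Real.sqrt 3 ≠ 0 := by positivity
        have hpi : π ≠ 0 := Real.pi_ne_zero
        have hlog2' : Real.log 2 ≠ 0 := hlog2.ne'
        field_simp
        linear_combination 2 * h3
end
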